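/- Let λ_1, λ_2 > 0 be real numbers. Then ||Poisson(λ_1) − Poisson(λ_2)|| ≤ e^{|λ_1 − λ_2|} − e^{−|λ_1 − λ_2|}. -/

import Mathlib

/-- The Poisson distribution with parameter `lam`. -/
noncomputable def poissonPMF (lam : ℝ) (i : ℕ) : ℝ :=
  Real.exp (-lam) * lam ^ i / (Nat.factorial i)

/-- Total variation distance between two distributions on `ℕ`. -/
noncomputable def tvDist (P Q : ℕ → ℝ) : ℝ := (1 / 2) * ∑' m : ℕ, |P m - Q m|

lemma exp_series_tsum (x : ℝ) : ∑' n : ℕ, x ^ n / (Nat.factorial n) = Real.exp x := by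
  rw [Real.exp_eq_exp_ℝ, NormedSpace.exp_eq_tsum_div]

lemma exp_series_summable (x : ℝ) : Summable (fun n : ℕ => x ^ n / (Nat.factorial n)) :=
  NormedSpace.expSeries_div_summable x

lemma poisson_tv_aux (lam1 lam2 : ℝ) (h1 : 0 < lam1) (h2 : 0 < lam2) (hle : lam2 ≤ lam1) :
    tvDist (poissonPMF lam1) (poissonPMF lam2) ≤ Real.exp (lam1 - lam2) - 1 := by
  set a : ℕ → ℝ := fun n => (Real.exp (-lam2) - Real.exp (-lam1)) * (lam1 ^ n / n.factorial)
  set b : ℕ → ℝ := fun n =>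
    Real.exp (-lam2) * (lam1 ^ n / n.factorial) - Real.exp (-lam2) * (lam2 ^ n / n.factorial)
  have hsa : Summable a := (exp_series_summable lam1).mul_left _
  have hsb : Summable b :=
    ((exp_series_summable lam1).mul_left _).sub ((exp_series_summable lam2).mul_left _)
  have hexp : Real.exp (-lam1) ≤ Real.exp (-lam2) := Real.exp_le_exp.mpr (by linarith)
  have hbound : ∀ n, |poissonPMF lam1 n - poissonPMF lam2 n| ≤ a n + b n := by
    intro n
    have hpow : lam2 ^ n ≤ lam1 ^ n := pow_le_pow_left₀ h2.le hle n
    have hdiv : lam2 ^ n / (n.factorial : ℝ) ≤ lam1 ^ n / n.factorial := by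
      gcongr
    have hdnn : (0:ℝ) ≤ lam1 ^ n / n.factorial := by positivity
    have hA : Real.exp (-lam1) * (lam1 ^ n / n.factorial)
        ≤ Real.exp (-lam2) * (lam1 ^ n / n.factorial) :=
      mul_le_mul_of_nonneg_right hexp hdnn
    have hB : Real.exp (-lam2) * (lam2 ^ n / (n.factorial : ℝ))
        ≤ Real.exp (-lam2) * (lam1 ^ n / n.factorial) :=
      mul_le_mul_of_nonneg_left hdiv (Real.exp_pos _).le
    have hC : (0:ℝ) ≤ Real.exp (-lam2) * (lam2 ^ n / n.factorial) := by positivity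
    have hD : (0:ℝ) ≤ Real.exp (-lam1) * (lam1 ^ n / n.factorial) := by positivity
    simp only [poissonPMF, a, b, mul_div_assoc, sub_mul]
    rw [abs_le]
    constructor <;> linarith
  have habs_nonneg : ∀ n, (0:ℝ) ≤ |poissonPMF lam1 n - poissonPMF lam2 n| :=
    fun n => abs_nonneg _
  have hsum : Summable (fun n => |poissonPMF lam1 n - poissonPMF lam2 n|) :=
    Summable.of_nonneg_of_le habs_nonneg hbound (hsa.add hsb)
  have hts : (∑' n, |poissonPMF lam1 n - poissonPMF lam2 n|) ≤ ∑' n, (a n + b n) :=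
    Summable.tsum_le_tsum hbound hsum (hsa.add hsb)
  have hta : ∑' n, a n = Real.exp (lam1 - lam2) - 1 := by
    rw [tsum_mul_left, exp_series_tsum, sub_mul, ← Real.exp_add, ← Real.exp_add,
      show -lam2 + lam1 = lam1 - lam2 by ring, show -lam1 + lam1 = (0:ℝ) by ring,
      Real.exp_zero]
  have htb : ∑' n, b n = Real.exp (lam1 - lam2) - 1 := by
    rw [Summable.tsum_sub ((exp_series_summable lam1).mul_left _) ((exp_series_summable lam2).mul_left _),
      tsum_mul_left, tsum_mul_left, exp_series_tsum, exp_series_tsum,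
      ← Real.exp_add, ← Real.exp_add,
      show -lam2 + lam1 = lam1 - lam2 by ring, show -lam2 + lam2 = (0:ℝ) by ring,
      Real.exp_zero]
  have htab : ∑' n, (a n + b n) = 2 * (Real.exp (lam1 - lam2) - 1) := by
    rw [Summable.tsum_add hsa hsb, hta, htb]; ring
  rw [tvDist]
  calc (1/2 : ℝ) * ∑' n, |poissonPMF lam1 n - poissonPMF lam2 n|
      ≤ (1/2) * (2 * (Real.exp (lam1 - lam2) - 1)) := by
        rw [← htab]; linarith [hts]
    _ = Real.exp (lam1 - lam2) - 1 := by ring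

/-- Total variation distance between two Poisson distributions:
`||Poisson(λ₁) − Poisson(λ₂)|| ≤ e^{|λ₁−λ₂|} − e^{−|λ₁−λ₂|}`. -/
theorem poisson_tv_bound (lam1 lam2 : ℝ) (h1 : 0 < lam1) (h2 : 0 < lam2) :
    tvDist (poissonPMF lam1) (poissonPMF lam2) ≤
      Real.exp |lam1 - lam2| - Real.exp (-|lam1 - lam2|) := by
  have hexp_le_one : Real.exp (-|lam1 - lam2|) ≤ 1 := by
    rw [Real.exp_le_one_iff]; simp [abs_nonneg]
  rcases le_total lam2 lam1 with hle | hle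
  · have := poisson_tv_aux lam1 lam2 h1 h2 hle
    have hx : Real.exp (-(lam1 - lam2)) ≤ 1 := by
      rw [Real.exp_le_one_iff]; linarith
    rw [abs_of_nonneg (by linarith : (0:ℝ) ≤ lam1 - lam2)]
    linarith
  · have := poisson_tv_aux lam2 lam1 h2 h1 hle
    have hsymm : tvDist (poissonPMF lam1) (poissonPMF lam2)
        = tvDist (poissonPMF lam2) (poissonPMF lam1) := by
      simp only [tvDist]
      congr 1
      exact tsum_congr fun n => abs_sub_comm _ _
    have hx : Real.exp (lam1 - lam2) ≤ 1 := by
      rw [Real.exp_le_one_iff]; linarith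
    rw [hsymm, show |lam1 - lam2| = lam2 - lam1 by
        rw [abs_sub_comm]; exact abs_of_nonneg (by linarith),
      show -(lam2 - lam1) = lam1 - lam2 by ring]
    linarith
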